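/- Let f = Σ_{i=1}^n a_i(1_{u_i} − 1_{v_i}) with a_i > 0 on a metric space M of 2n points, where {u_i v_i} is a minimum weight perfect matching. Suppose an optimal transportation plan for f moves product only from points u_i to points v_j (condition (A)) and contains a cycle: for indices n(0),…,n(k) with n(k+1)=n(0), an amount c > 0 is moved from u_{n(i)} to v_{n(i+1)} for each i = 0,…,k. Then Σ_{i=0}^k d(u_{n(i)}, v_{n(i)}) ≤ Σ_{i=0}^k d(u_{n(i)}, v_{n(i+1)}), and replacing the cycle moves by moving c units from each u_{n(i)} directly to v_{n(i)} yields another optimal plan satisfying (A) with strictly larger total amount moved along matching edges. -/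

import Mathlib

/-- The transportation cost (Kantorovich–Rubinstein) norm of a finitely supported
zero-sum function `f` on a metric space: the infimum of costs of transportation
plans solving `f`. -/
noncomputable def tcCost {M : Type*} [MetricSpace M] (f : M →₀ ℝ) : ℝ :=
  sInf {c : ℝ | ∃ (n : ℕ) (a : Fin n → ℝ) (x y : Fin n → M),
    (∀ i, 0 ≤ a i) ∧
    f = ∑ i, a i • (Finsupp.single (x i) 1 - Finsupp.single (y i) 1) ∧
    c = ∑ i, a i * dist (x i) (y i)}


lemma tcCostAux_le_plan {M : Type*} [MetricSpace M] (f : M →₀ ℝ) {N : ℕ}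
    (a : Fin N → ℝ) (x y : Fin N → M) (h0 : ∀ i, 0 ≤ a i)
    (hf : f = ∑ i, a i • (Finsupp.single (x i) (1:ℝ) - Finsupp.single (y i) 1)) :
    tcCost f ≤ ∑ i, a i * dist (x i) (y i) := by
  apply csInf_le
  · refine ⟨0, ?_⟩
    rintro cc ⟨n, a, x, y, h0, -, rfl⟩
    exact Finset.sum_nonneg fun i _ => mul_nonneg (h0 i) dist_nonneg
  · exact ⟨N, a, x, y, h0, hf, rfl⟩

lemma sum_matrix_reindex {V : Type*} [AddCommMonoid V] {n : ℕ} (F : Fin n → Fin n → V) :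
    ∑ q : Fin (n * n), F ((finProdFinEquiv.symm q).1) ((finProdFinEquiv.symm q).2)
      = ∑ i, ∑ j, F i j :=
  calc ∑ q : Fin (n * n), F ((finProdFinEquiv.symm q).1) ((finProdFinEquiv.symm q).2)
      = ∑ x : Fin n × Fin n, F x.1 x.2 :=
        Equiv.sum_comp finProdFinEquiv.symm (fun x : Fin n × Fin n => F x.1 x.2)
    _ = ∑ i, ∑ j, F i j := Fintype.sum_prod_type (f := fun x : Fin n × Fin n => F x.1 x.2)

lemma tcCostAux_le_matrix {M : Type*} [MetricSpace M] (f : M →₀ ℝ) {n : ℕ}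
    (t : Fin n → Fin n → ℝ) (u v : Fin n → M) (h0 : ∀ i j, 0 ≤ t i j)
    (hf : f = ∑ i, ∑ j, t i j • (Finsupp.single (u i) (1:ℝ) - Finsupp.single (v j) 1)) :
    tcCost f ≤ ∑ i, ∑ j, t i j * dist (u i) (v j) := by
  classical
  set e := finProdFinEquiv (m := n) (n := n) with he
  have := tcCostAux_le_plan f (fun q => t (e.symm q).1 (e.symm q).2)
    (fun q => u (e.symm q).1) (fun q => v (e.symm q).2) (fun q => h0 _ _)
    (by rw [hf]; exact (sum_matrix_reindex (V := M →₀ ℝ) (fun i j => t i j • (Finsupp.single (u i) (1:ℝ) - Finsupp.single (v j) 1))).symm)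
  exact this.trans_eq (sum_matrix_reindex (V := ℝ) (fun i j => t i j * dist (u i) (v j)))

lemma sum_ite_exists {V : Type*} [AddCommMonoid V] {n N : ℕ} (m g : Fin N → Fin n)
    (hm : Function.Injective m) (F : Fin n → Fin n → V) :
    ∑ i, ∑ j, (if ∃ p, m p = i ∧ g p = j then F i j else 0) = ∑ p, F (m p) (g p) := by
  classical
  have einj : Function.Injective (fun p => ((m p, g p) : Fin n × Fin n)) := by
    intro p q h
    exact hm (congrArg Prod.fst h)
  have h1 : ∑ x : Fin n × Fin n, (if ∃ p, (m p, g p) = x then F x.1 x.2 else 0)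
      = ∑ i, ∑ j, (if ∃ p, m p = i ∧ g p = j then F i j else 0) := by
    rw [Fintype.sum_prod_type]
    simp [Prod.ext_iff]
  rw [← h1]
  have h2 : ∀ x : Fin n × Fin n, (∃ p, (m p, g p) = x) ↔
      x ∈ Finset.image (fun p => ((m p, g p) : Fin n × Fin n)) Finset.univ := by
    intro x; simp [Finset.mem_image]
  calc ∑ x : Fin n × Fin n, (if ∃ p, (m p, g p) = x then F x.1 x.2 else 0)
      = ∑ x : Fin n × Fin n, (if x ∈ Finset.image (fun p => ((m p, g p) : Fin n × Fin n)) Finset.univ then F x.1 x.2 else 0) := by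
        refine Finset.sum_congr rfl fun x _ => ?_
        rw [if_congr (h2 x) rfl rfl]
    _ = ∑ x ∈ Finset.image (fun p => ((m p, g p) : Fin n × Fin n)) Finset.univ, F x.1 x.2 := by
        rw [Finset.sum_ite_mem, Finset.univ_inter]
    _ = ∑ p, F (m p) (g p) := Finset.sum_image (fun p _ q _ h => einj h)

/-- Cycle-uncrossing step. Let `f = Σ aᵢ(1_{uᵢ} − 1_{vᵢ})`, `aᵢ > 0`, where `{uᵢvᵢ}` is a
minimum weight perfect matching of a `2n`-point metric space. Suppose an optimal plan for
`f` satisfying condition (A) is given by a matrix `s` (moving `s i j` units from `uᵢ` to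
`v_j`) and contains a cycle: `c > 0` units are moved from `u_{m p}` to `v_{m (p+1)}` for
`p = 0,…,k` (indices mod `k+1`, `m` injective). Then
`Σ_p d(u_{m p}, v_{m p}) ≤ Σ_p d(u_{m p}, v_{m (p+1)})`, and rerouting the cycle along the
matching edges yields another optimal plan satisfying (A) whose total amount moved along
matching edges is strictly larger. -/
theorem cycle_uncrossing {M : Type*} [MetricSpace M] [Fintype M]
    (n : ℕ) (hcard : Fintype.card M = 2 * n)
    (u v : Fin n → M) (hmatch : Function.Bijective (Sum.elim u v))
    (hmin : ∀ u' v' : Fin n → M, Function.Bijective (Sum.elim u' v') →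
      ∑ i, dist (u i) (v i) ≤ ∑ i, dist (u' i) (v' i))
    (a : Fin n → ℝ) (ha : ∀ i, 0 < a i)
    (s : Fin n → Fin n → ℝ) (hs : ∀ i j, 0 ≤ s i j)
    (hplan : (∑ i, a i • (Finsupp.single (u i) (1 : ℝ) - Finsupp.single (v i) 1))
      = ∑ i, ∑ j, s i j • (Finsupp.single (u i) (1 : ℝ) - Finsupp.single (v j) 1))
    (hopt : ∑ i, ∑ j, s i j * dist (u i) (v j)
      = tcCost (∑ i, a i • (Finsupp.single (u i) (1 : ℝ) - Finsupp.single (v i) 1)))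
    (k : ℕ) (hk : 1 ≤ k)
    (m : Fin (k + 1) → Fin n) (hm : Function.Injective m)
    (c : ℝ) (hc : 0 < c)
    (hcyc : ∀ p : Fin (k + 1), c ≤ s (m p) (m (p + 1))) :
    (∑ p : Fin (k + 1), dist (u (m p)) (v (m p))
      ≤ ∑ p : Fin (k + 1), dist (u (m p)) (v (m (p + 1)))) ∧
    ∀ s' : Fin n → Fin n → ℝ,
      (s' = fun i j => s i j + (if i = j ∧ (∃ p, m p = i) then c else 0)
        - (if ∃ p, m p = i ∧ m (p + 1) = j then c else 0)) →
      (∀ i j, 0 ≤ s' i j) ∧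
      ((∑ i, a i • (Finsupp.single (u i) (1 : ℝ) - Finsupp.single (v i) 1))
        = ∑ i, ∑ j, s' i j • (Finsupp.single (u i) (1 : ℝ) - Finsupp.single (v j) 1)) ∧
      (∑ i, ∑ j, s' i j * dist (u i) (v j)
        = tcCost (∑ i, a i • (Finsupp.single (u i) (1 : ℝ) - Finsupp.single (v i) 1))) ∧
      (∑ i, s i i < ∑ i, s' i i) := by
  classical
  -- the cycle-shift map on indices
  set g : Fin n → Fin n := fun i =>
    if h : ∃ p, m p = i then m (Classical.choose h + 1) else i with hgdef
  have hg : ∀ p, g (m p) = m (p + 1) := by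
    intro p
    have h : ∃ q, m q = m p := ⟨p, rfl⟩
    simp only [hgdef, dif_pos h]
    rw [hm (Classical.choose_spec h)]
  have hgnot : ∀ i, (¬ ∃ p, m p = i) → g i = i := by
    intro i hi
    simp only [hgdef, dif_neg hi]
  have hginj : Function.Injective g := by
    intro i j hij
    by_cases hi : ∃ p, m p = i <;> by_cases hj : ∃ q, m q = j
    · obtain ⟨p, rfl⟩ := hi
      obtain ⟨q, rfl⟩ := hj
      rw [hg p, hg q] at hij
      have := add_right_cancel (hm hij)
      rw [this]
    · exfalso
      obtain ⟨p, rfl⟩ := hi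
      rw [hg p, hgnot j hj] at hij
      exact hj ⟨p + 1, hij⟩
    · exfalso
      obtain ⟨q, rfl⟩ := hj
      rw [hg q, hgnot i hi] at hij
      exact hi ⟨q + 1, hij.symm⟩
    · rwa [hgnot i hi, hgnot j hj] at hij
  -- the rerouted matching is a bijection
  have hbij : Function.Bijective (Sum.elim u (v ∘ g)) := by
    rw [Fintype.bijective_iff_injective_and_card]
    constructor
    · have hcomp : Sum.elim u (v ∘ g) = (Sum.elim u v) ∘ Sum.map id g := by
        funext x; cases x <;> rfl
      rw [hcomp]
      exact hmatch.injective.comp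
        (Function.Injective.sumMap Function.injective_id hginj)
    · simp [hcard, two_mul]
  have hmin' := hmin u (v ∘ g) hbij
  -- part 1
  have key1 : ∑ i, (dist (u i) (v (g i)) - dist (u i) (v i))
      = ∑ p, (dist (u (m p)) (v (m (p + 1))) - dist (u (m p)) (v (m p))) := by
    have h0 : ∀ i ∈ Finset.univ, i ∉ Finset.image m Finset.univ →
        dist (u i) (v (g i)) - dist (u i) (v i) = 0 := by
      intro i _ hi
      have hni : ¬ ∃ p, m p = i := by simpa [Finset.mem_image] using hi
      rw [hgnot i hni, sub_self]
    rw [← Finset.sum_subset (Finset.subset_univ (Finset.image m Finset.univ)) h0,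
      Finset.sum_image (fun p _ q _ h => hm h)]
    refine Finset.sum_congr rfl fun p _ => ?_
    rw [hg p]
  have part1 : ∑ p : Fin (k + 1), dist (u (m p)) (v (m p))
      ≤ ∑ p : Fin (k + 1), dist (u (m p)) (v (m (p + 1))) := by
    have h1 : (0:ℝ) ≤ ∑ i, (dist (u i) (v (g i)) - dist (u i) (v i)) := by
      rw [Finset.sum_sub_distrib]
      have : ∑ i, dist (u i) (v (g i)) = ∑ i, dist (u i) ((v ∘ g) i) := rfl
      linarith [hmin']
    rw [key1, Finset.sum_sub_distrib] at h1
    linarith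
  refine ⟨part1, ?_⟩
  rintro s' rfl
  -- a cycle edge never goes from a point to its own match
  have hA : ∀ i j : Fin n, (∃ p, m p = i ∧ m (p + 1) = j) → i ≠ j := by
    rintro i j ⟨p, rfl, rfl⟩ h
    have h2 : p = p + 1 := hm h
    have h3 : p + 0 = p + 1 := by simpa using h2
    have h4 : (0 : Fin (k + 1)) = 1 := add_left_cancel h3
    have h5 : ((0 : Fin (k + 1)) : ℕ) = ((1 : Fin (k + 1)) : ℕ) := congrArg _ h4
    rw [Fin.val_one', Nat.mod_eq_of_lt (by omega)] at h5
    simp at h5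
  have hcond : ∀ i j : Fin n, ((i = j ∧ ∃ p, m p = i) ↔ (∃ p, m p = i ∧ m p = j)) := by
    intro i j
    constructor
    · rintro ⟨rfl, p, rfl⟩
      exact ⟨p, rfl, rfl⟩
    · rintro ⟨p, rfl, h⟩
      exact ⟨h, p, rfl⟩
  -- nonnegativity of the new plan
  have hnn : ∀ i j, (0:ℝ) ≤ s i j + (if i = j ∧ (∃ p, m p = i) then c else 0)
      - (if ∃ p, m p = i ∧ m (p + 1) = j then c else 0) := by
    intro i j
    split_ifs with h1 h2 h3
    · exact absurd h1.1 (hA i j h2)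
    · linarith [hs i j, hc.le]
    · obtain ⟨p, hp1, hp2⟩ := h3
      have := hcyc p
      rw [hp1, hp2] at this
      linarith
    · linarith [hs i j]
  -- the new plan solves f
  have hplan' : (∑ i, a i • (Finsupp.single (u i) (1 : ℝ) - Finsupp.single (v i) 1))
      = ∑ i, ∑ j, (s i j + (if i = j ∧ (∃ p, m p = i) then c else 0)
        - (if ∃ p, m p = i ∧ m (p + 1) = j then c else 0))
          • (Finsupp.single (u i) (1 : ℝ) - Finsupp.single (v j) 1) := by
    have hexp : ∀ i j : Fin n, (s i j + (if i = j ∧ (∃ p, m p = i) then c else 0)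
        - (if ∃ p, m p = i ∧ m (p + 1) = j then c else 0))
          • (Finsupp.single (u i) (1 : ℝ) - Finsupp.single (v j) 1)
        = s i j • (Finsupp.single (u i) (1 : ℝ) - Finsupp.single (v j) 1)
          + (if ∃ p, m p = i ∧ m p = j then
              c • (Finsupp.single (u i) (1 : ℝ) - Finsupp.single (v j) 1) else 0)
          - (if ∃ p, m p = i ∧ m (p + 1) = j then
              c • (Finsupp.single (u i) (1 : ℝ) - Finsupp.single (v j) 1) else 0) := by
      intro i j
      simp only [sub_smul, add_smul, ite_smul, zero_smul]
      rw [if_congr (hcond i j) rfl rfl]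
    calc (∑ i, a i • (Finsupp.single (u i) (1 : ℝ) - Finsupp.single (v i) 1))
        = ∑ i, ∑ j, s i j • (Finsupp.single (u i) (1 : ℝ) - Finsupp.single (v j) 1) := hplan
      _ = ∑ i, ∑ j, s i j • (Finsupp.single (u i) (1 : ℝ) - Finsupp.single (v j) 1)
          + ∑ p, c • (Finsupp.single (u (m p)) (1 : ℝ) - Finsupp.single (v (m p)) 1)
          - ∑ p, c • (Finsupp.single (u (m p)) (1 : ℝ) - Finsupp.single (v (m (p + 1))) 1) := by
          have hv : ∑ p : Fin (k + 1), c • (Finsupp.single (v (m (p + 1))) (1:ℝ))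
              = ∑ p : Fin (k + 1), c • (Finsupp.single (v (m p)) (1:ℝ)) :=
            Fintype.sum_equiv (Equiv.addRight (1 : Fin (k + 1)))
              (fun p => c • (Finsupp.single (v (m (p + 1))) (1:ℝ)))
              (fun p => c • (Finsupp.single (v (m p)) (1:ℝ))) (fun p => rfl)
          simp only [smul_sub, Finset.sum_sub_distrib, hv]
          abel
      _ = _ := by
          simp only [hexp, Finset.sum_add_distrib, Finset.sum_sub_distrib]
          rw [sum_ite_exists m m hm
              (fun i j => c • (Finsupp.single (u i) (1 : ℝ) - Finsupp.single (v j) 1)),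
            sum_ite_exists m (fun p => m (p + 1)) hm
              (fun i j => c • (Finsupp.single (u i) (1 : ℝ) - Finsupp.single (v j) 1))]
  refine ⟨hnn, hplan', ?_, ?_⟩
  · -- optimality of the new plan
    have hexp : ∀ i j : Fin n, (s i j + (if i = j ∧ (∃ p, m p = i) then c else 0)
        - (if ∃ p, m p = i ∧ m (p + 1) = j then c else 0)) * dist (u i) (v j)
        = s i j * dist (u i) (v j)
          + (if ∃ p, m p = i ∧ m p = j then c * dist (u i) (v j) else 0)
          - (if ∃ p, m p = i ∧ m (p + 1) = j then c * dist (u i) (v j) else 0) := by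
      intro i j
      simp only [sub_mul, add_mul, ite_mul, zero_mul]
      rw [if_congr (hcond i j) rfl rfl]
    have hcost : ∑ i, ∑ j, (s i j + (if i = j ∧ (∃ p, m p = i) then c else 0)
        - (if ∃ p, m p = i ∧ m (p + 1) = j then c else 0)) * dist (u i) (v j)
        = ∑ i, ∑ j, s i j * dist (u i) (v j)
          + ∑ p, c * dist (u (m p)) (v (m p))
          - ∑ p, c * dist (u (m p)) (v (m (p + 1))) := by
      simp only [hexp, Finset.sum_add_distrib, Finset.sum_sub_distrib]
      rw [sum_ite_exists m m hm (fun i j => c * dist (u i) (v j)),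
        sum_ite_exists m (fun p => m (p + 1)) hm (fun i j => c * dist (u i) (v j))]
    have hle2 : ∑ i, ∑ j, (s i j + (if i = j ∧ (∃ p, m p = i) then c else 0)
        - (if ∃ p, m p = i ∧ m (p + 1) = j then c else 0)) * dist (u i) (v j)
        ≤ tcCost (∑ i, a i • (Finsupp.single (u i) (1 : ℝ) - Finsupp.single (v i) 1)) := by
      rw [hcost, ← hopt]
      have : ∑ p, c * dist (u (m p)) (v (m p)) ≤ ∑ p, c * dist (u (m p)) (v (m (p + 1))) := by
        rw [← Finset.mul_sum, ← Finset.mul_sum]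
        exact mul_le_mul_of_nonneg_left part1 hc.le
      linarith
    have hle1 := tcCostAux_le_matrix
      (∑ i, a i • (Finsupp.single (u i) (1 : ℝ) - Finsupp.single (v i) 1))
      (fun i j => s i j + (if i = j ∧ (∃ p, m p = i) then c else 0)
        - (if ∃ p, m p = i ∧ m (p + 1) = j then c else 0)) u v hnn hplan'
    exact le_antisymm hle2 hle1
  · -- strictly more mass on the matching edges
    apply Finset.sum_lt_sum
    · intro i _
      have h2 : ¬ ∃ p, m p = i ∧ m (p + 1) = i := fun h => hA i i h rfl
      dsimp only
      rw [if_neg h2]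
      split_ifs with h1
      · linarith [hc.le]
      · linarith
    · refine ⟨m 0, Finset.mem_univ _, ?_⟩
      dsimp only
      rw [if_pos (⟨rfl, 0, rfl⟩ : m 0 = m 0 ∧ ∃ p, m p = m 0),
        if_neg (fun h => hA _ _ h rfl)]
      linarith
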